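/- Let G ∈ ℂ^{n×n} be a unitary matrix that is CMV structured with block size k (with n = 2sk). Then for every p with 1 ≤ p ≤ s−1, the 2k×2k submatrix G(2pk+1 : 2(p+1)k, (2p−1)k+1 : (2p+1)k) has rank exactly k. -/
import Mathlib


open Matrix

lemma blk_lt {m k : ℕ} (i : Fin m) (a : Fin k) : i.1 * k + a.1 < m * k := by
  have h1 : i.1 * k + a.1 < (i.1 + 1) * k := by
    have := a.2
    rw [Nat.add_mul]
    omega
  have h2 : (i.1 + 1) * k ≤ m * k := Nat.mul_le_mul_right _ i.2
  omega

/-- The `(i,j)`-th (0-based) `k × k` block of an `(m·k) × (m·k)` matrix. -/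
def blk {m k : ℕ} (G : Matrix (Fin (m * k)) (Fin (m * k)) ℂ) (i j : Fin m) :
    Matrix (Fin k) (Fin k) ℂ :=
  Matrix.of fun a b => G ⟨i.1 * k + a.1, blk_lt i a⟩ ⟨j.1 * k + b.1, blk_lt j b⟩

/-- A square matrix is lower triangular: the entries above the diagonal vanish. -/
def LowerTriangular {k : ℕ} (M : Matrix (Fin k) (Fin k) ℂ) : Prop :=
  ∀ a b : Fin k, a < b → M a b = 0

/-- A square matrix is upper triangular: the entries below the diagonal vanish. -/
def UpperTriangular {k : ℕ} (M : Matrix (Fin k) (Fin k) ℂ) : Prop :=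
  ∀ a b : Fin k, b < a → M a b = 0

/-- `G ∈ ℂ^{n×n}` (with `n = 2sk`), partitioned into `k × k` blocks `G_{ij}`
(`1 ≤ i,j ≤ 2s`), is *CMV structured with block size `k`* if `G_{ij} = 0`
whenever `j < 2⌈i/2⌉ − 2` or `j > 2⌈i/2⌉ + 1`, the blocks `G_{2p−1,2p+1}`
(`1 ≤ p ≤ s−1`) are nonsingular lower triangular, and the blocks `G_{2,1}` and
`G_{2p,2p−2}` (`2 ≤ p ≤ s`) are nonsingular upper triangular.
(Below, block indices are 0-based: block `(i₀,j₀)` corresponds to `(i₀+1, j₀+1)`,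
and `⌈(i₀+1)/2⌉ = (i₀+2)/2` with natural division.) -/
def IsCMV (s k : ℕ) (G : Matrix (Fin (2 * s * k)) (Fin (2 * s * k)) ℂ) : Prop :=
  (∀ i j : Fin (2 * s),
      (j.1 + 3 < 2 * ((i.1 + 2) / 2) ∨ 2 * ((i.1 + 2) / 2) < j.1) → blk G i j = 0) ∧
  (∀ p : ℕ, ∀ _ : 1 ≤ p, ∀ _ : p ≤ s - 1,
      LowerTriangular (blk G ⟨2 * p - 2, by omega⟩ ⟨2 * p, by omega⟩) ∧
      (blk G ⟨2 * p - 2, by omega⟩ ⟨2 * p, by omega⟩).det ≠ 0) ∧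
  (∀ _ : 1 ≤ s,
      UpperTriangular (blk G ⟨1, by omega⟩ ⟨0, by omega⟩) ∧
      (blk G ⟨1, by omega⟩ ⟨0, by omega⟩).det ≠ 0) ∧
  (∀ p : ℕ, ∀ _ : 2 ≤ p, ∀ _ : p ≤ s,
      UpperTriangular (blk G ⟨2 * p - 1, by omega⟩ ⟨2 * p - 3, by omega⟩) ∧
      (blk G ⟨2 * p - 1, by omega⟩ ⟨2 * p - 3, by omega⟩).det ≠ 0)

lemma row_lt {s k p : ℕ} (hp1 : 1 ≤ p) (hp2 : p ≤ s - 1) (a : Fin (2 * k)) :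
    2 * p * k + a.1 < 2 * s * k := by
  have h1 : 2 * p * k + a.1 < (2 * p + 2) * k := by
    have := a.2; rw [Nat.add_mul]; omega
  have h2 : (2 * p + 2) * k ≤ 2 * s * k := Nat.mul_le_mul_right _ (by omega)
  omega

lemma col_lt {s k p : ℕ} (hp1 : 1 ≤ p) (hp2 : p ≤ s - 1) (b : Fin (2 * k)) :
    (2 * p - 1) * k + b.1 < 2 * s * k := by
  have h1 : (2 * p - 1) * k + b.1 < ((2 * p - 1) + 2) * k := by
    have := b.2; rw [Nat.add_mul]; omega
  have h2 : ((2 * p - 1) + 2) * k ≤ 2 * s * k := Nat.mul_le_mul_right _ (by omega)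
  omega

lemma rank_ge_of_submatrix_det_ne_zero {N k : ℕ} (A : Matrix (Fin N) (Fin N) ℂ)
    (f g : Fin k → Fin N) (h : (A.submatrix f g).det ≠ 0) : k ≤ A.rank := by
  classical
  set P : Matrix (Fin k) (Fin N) ℂ := Matrix.of fun i j => if j = f i then 1 else 0 with hP
  set Q : Matrix (Fin N) (Fin k) ℂ := Matrix.of fun i j => if i = g j then 1 else 0 with hQ
  have hfact : A.submatrix f g = P * (A * Q) := by
    ext i j
    simp [hP, hQ, Matrix.mul_apply, Finset.sum_ite_eq, Finset.sum_ite_eq']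
  have hr : (A.submatrix f g).rank = k := by
    rw [Matrix.rank_of_isUnit _ ((Matrix.isUnit_iff_isUnit_det _).2 (isUnit_iff_ne_zero.2 h))]
    simp
  calc k = (A.submatrix f g).rank := hr.symm
    _ = (P * (A * Q)).rank := by rw [hfact]
    _ ≤ (A * Q).rank := Matrix.rank_mul_le_right _ _
    _ ≤ A.rank := Matrix.rank_mul_le_left _ _

lemma G_congr {n : ℕ} (G : Matrix (Fin n) (Fin n) ℂ) {a c b d : Fin n}
    (h1 : a.1 = c.1) (h2 : b.1 = d.1) : G a b = G c d := by
  rw [show a = c from Fin.ext h1, show b = d from Fin.ext h2]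

lemma row_lt' {s k p : ℕ} (hp1 : 1 ≤ p) (hp2 : p ≤ s - 1) (a : Fin (2 * k)) :
    (2 * p - 2) * k + a.1 < 2 * s * k := by
  have h1 : (2 * p - 2) * k + a.1 < ((2 * p - 2) + 2) * k := by
    have := a.2; rw [Nat.add_mul]; omega
  have h2 : ((2 * p - 2) + 2) * k ≤ 2 * s * k := Nat.mul_le_mul_right _ (by omega)
  omega

theorem cmv_corner_rank (s k : ℕ) (G : Matrix (Fin (2 * s * k)) (Fin (2 * s * k)) ℂ)
    (hGu : G ∈ Matrix.unitaryGroup (Fin (2 * s * k)) ℂ) (hG : IsCMV s k G)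
    (p : ℕ) (hp1 : 1 ≤ p) (hp2 : p ≤ s - 1) :
    (Matrix.of fun a b : Fin (2 * k) =>
        G ⟨2 * p * k + a.1, row_lt hp1 hp2 a⟩
          ⟨(2 * p - 1) * k + b.1, col_lt hp1 hp2 b⟩).rank = k := by
  classical
  rcases Nat.eq_zero_or_pos k with hk0 | hk
  · subst hk0
    have h := Matrix.rank_le_card_width (Matrix.of fun a b : Fin (2 * 0) =>
        G ⟨2 * p * 0 + a.1, row_lt hp1 hp2 a⟩
          ⟨(2 * p - 1) * 0 + b.1, col_lt hp1 hp2 b⟩)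
    simpa using h
  have hs : 2 ≤ s := by omega
  have hmul1 : (2 * p - 2) * k + 2 * k = 2 * p * k := by
    rw [← Nat.add_mul]; congr 1; omega
  have hmul2 : (2 * p - 1) * k + k = 2 * p * k := by
    obtain ⟨q, rfl⟩ : ∃ q, p = q + 1 := ⟨p - 1, by omega⟩
    have h3 : 2 * (q + 1) - 1 = 2 * q + 1 := by omega
    rw [h3]; ring
  have hmul3 : (2 * p + 2) * k = 2 * p * k + 2 * k := Nat.add_mul _ _ _
  have hmul4 : (2 * p - 1) * k + 2 * k = (2 * p + 1) * k := by
    rw [← Nat.add_mul]; congr 1; omega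
  have hmul5 : (2 * p + 1) * k = 2 * p * k + k := by rw [Nat.add_mul, one_mul]
  set M : Matrix (Fin (2 * k)) (Fin (2 * k)) ℂ :=
    Matrix.of fun a b : Fin (2 * k) =>
        G ⟨2 * p * k + a.1, row_lt hp1 hp2 a⟩
          ⟨(2 * p - 1) * k + b.1, col_lt hp1 hp2 b⟩ with hM
  set T : Matrix (Fin (2 * k)) (Fin (2 * k)) ℂ :=
    Matrix.of fun a b : Fin (2 * k) =>
        G ⟨(2 * p - 2) * k + a.1, row_lt' hp1 hp2 a⟩
          ⟨(2 * p - 1) * k + b.1, col_lt hp1 hp2 b⟩ with hT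
  -- entries of G vanish outside the CMV band
  have hzero : ∀ u c : Fin (2 * s * k),
      (c.1 / k + 3 < 2 * ((u.1 / k + 2) / 2) ∨ 2 * ((u.1 / k + 2) / 2) < c.1 / k) →
      G u c = 0 := by
    intro u c hcond
    have hik : u.1 / k < 2 * s := (Nat.div_lt_iff_lt_mul hk).2 u.2
    have hjk : c.1 / k < 2 * s := (Nat.div_lt_iff_lt_mul hk).2 c.2
    have h := hG.1 ⟨u.1 / k, hik⟩ ⟨c.1 / k, hjk⟩ hcond
    have heq : G u c = blk G ⟨u.1 / k, hik⟩ ⟨c.1 / k, hjk⟩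
        ⟨u.1 % k, Nat.mod_lt _ hk⟩ ⟨c.1 % k, Nat.mod_lt _ hk⟩ := by
      simp only [blk, Matrix.of_apply]
      congr 1 <;> exact Fin.ext (Nat.div_add_mod' _ _).symm
    rw [heq, h, Matrix.zero_apply]
  -- key orthogonality: M * Tᴴ = 0
  have hMT : M * Tᴴ = 0 := by
    ext a b
    set u : Fin (2 * s * k) := ⟨2 * p * k + a.1, row_lt hp1 hp2 a⟩ with hu
    set v : Fin (2 * s * k) := ⟨(2 * p - 2) * k + b.1, row_lt' hp1 hp2 b⟩ with hv
    have hval_u : u.1 = 2 * p * k + a.1 := rfl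
    have hval_v : v.1 = (2 * p - 2) * k + b.1 := rfl
    have huv : u ≠ v := by
      intro h
      have h1 := congrArg Fin.val h
      rw [hval_u, hval_v] at h1
      have := b.2
      omega
    have hGG : (∑ c : Fin (2 * s * k), G u c * star (G v c)) = 0 := by
      have h1 : G * star G = 1 := (Matrix.mem_unitaryGroup_iff).1 hGu
      have h2 := congrFun (congrFun h1 u) v
      rw [Matrix.mul_apply] at h2
      simp only [Matrix.star_apply] at h2
      rw [h2]
      exact Matrix.one_apply_ne huv
    -- bounds on block indices of u and v
    have hu1 : 2 * p ≤ u.1 / k :=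
      (Nat.le_div_iff_mul_le hk).2 (by rw [hval_u]; exact Nat.le_add_right _ _)
    have hu2 : u.1 / k < 2 * p + 2 := by
      apply (Nat.div_lt_iff_lt_mul hk).2
      rw [hval_u]
      have := a.2
      omega
    have hv1 : 2 * p - 2 ≤ v.1 / k :=
      (Nat.le_div_iff_mul_le hk).2 (by rw [hval_v]; exact Nat.le_add_right _ _)
    have hv2 : v.1 / k < 2 * p := by
      apply (Nat.div_lt_iff_lt_mul hk).2
      rw [hval_v]
      have := b.2
      omega
    -- the summand vanishes outside the column window [(2p-1)k, (2p+1)k)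
    have hout : ∀ c : Fin (2 * s * k), c.1 < (2 * p - 1) * k ∨ (2 * p + 1) * k ≤ c.1 →
        G u c * star (G v c) = 0 := by
      intro c hc
      rcases hc with hc | hc
      · have hjc : c.1 / k < 2 * p - 1 := (Nat.div_lt_iff_lt_mul hk).2 hc
        have : G u c = 0 := hzero u c (Or.inl (by omega))
        rw [this, zero_mul]
      · have hjc : 2 * p + 1 ≤ c.1 / k := (Nat.le_div_iff_mul_le hk).2 hc
        have : G v c = 0 := hzero v c (Or.inr (by omega))
        rw [this, star_zero, mul_zero]
    -- reindex
    set e : Fin (2 * k) → Fin (2 * s * k) :=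
      fun c' => ⟨(2 * p - 1) * k + c'.1, col_lt hp1 hp2 c'⟩ with he
    have hinj : ∀ x ∈ Finset.univ, ∀ y ∈ Finset.univ, e x = e y → x = (y : Fin (2 * k)) := by
      intro x _ y _ hxy
      have h1 := congrArg Fin.val hxy
      have h2 : (2 * p - 1) * k + x.1 = (2 * p - 1) * k + y.1 := h1
      exact Fin.ext (by omega)
    have hsum : (∑ c : Fin (2 * s * k), G u c * star (G v c)) =
        ∑ c' : Fin (2 * k), G u (e c') * star (G v (e c')) := by
      calc (∑ c : Fin (2 * s * k), G u c * star (G v c))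
          = ∑ c ∈ Finset.univ.image e, G u c * star (G v c) := by
            apply (Finset.sum_subset (Finset.subset_univ _) _).symm
            intro c _ hc
            apply hout
            by_contra hcon
            push_neg at hcon
            apply hc
            rw [Finset.mem_image]
            refine ⟨⟨c.1 - (2 * p - 1) * k, by omega⟩, Finset.mem_univ _, ?_⟩
            apply Fin.ext
            show (2 * p - 1) * k + (c.1 - (2 * p - 1) * k) = c.1
            omega
        _ = ∑ c' : Fin (2 * k), G u (e c') * star (G v (e c')) := Finset.sum_image hinj
    have hentry : (M * Tᴴ) a b =
        ∑ c' : Fin (2 * k), G u (e c') * star (G v (e c')) := by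
      rw [Matrix.mul_apply]
      apply Finset.sum_congr rfl
      intro c' _
      rw [Matrix.conjTranspose_apply]
      rfl
    rw [Matrix.zero_apply, hentry, ← hsum, hGG]
  -- lower bound for T: its top-right k×k block is nonsingular
  have hsubT : T.submatrix (fun a : Fin k => (⟨a.1, by omega⟩ : Fin (2 * k)))
      (fun b : Fin k => (⟨k + b.1, by omega⟩ : Fin (2 * k))) =
      blk G ⟨2 * p - 2, by omega⟩ ⟨2 * p, by omega⟩ := by
    ext a b
    show G ⟨(2 * p - 2) * k + a.1, _⟩ ⟨(2 * p - 1) * k + (k + b.1), _⟩ =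
      G ⟨(2 * p - 2) * k + a.1, _⟩ ⟨2 * p * k + b.1, _⟩
    exact G_congr G rfl (by show (2 * p - 1) * k + (k + b.1) = 2 * p * k + b.1; omega)
  have hdetT : (T.submatrix (fun a : Fin k => (⟨a.1, by omega⟩ : Fin (2 * k)))
      (fun b : Fin k => (⟨k + b.1, by omega⟩ : Fin (2 * k)))).det ≠ 0 := by
    rw [hsubT]
    exact (hG.2.1 p hp1 hp2).2
  -- rank of Tᴴ is at least k
  have hTHrank : k ≤ Tᴴ.rank := by
    apply rank_ge_of_submatrix_det_ne_zero Tᴴ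
      (fun b : Fin k => (⟨k + b.1, by omega⟩ : Fin (2 * k)))
      (fun a : Fin k => (⟨a.1, by omega⟩ : Fin (2 * k)))
    have hct : Tᴴ.submatrix (fun b : Fin k => (⟨k + b.1, by omega⟩ : Fin (2 * k)))
        (fun a : Fin k => (⟨a.1, by omega⟩ : Fin (2 * k))) =
        (T.submatrix (fun a : Fin k => (⟨a.1, by omega⟩ : Fin (2 * k)))
          (fun b : Fin k => (⟨k + b.1, by omega⟩ : Fin (2 * k))))ᴴ := by
      ext a b; rfl
    rw [hct, Matrix.det_conjTranspose]
    exact star_ne_zero.2 hdetT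
  -- lower bound for M: its bottom-left k×k block is nonsingular
  have hMrank : k ≤ M.rank := by
    apply rank_ge_of_submatrix_det_ne_zero M (fun a => ⟨k + a.1, by omega⟩)
      (fun b => ⟨b.1, by omega⟩)
    have hsubM : M.submatrix (fun a : Fin k => (⟨k + a.1, by omega⟩ : Fin (2 * k)))
        (fun b : Fin k => (⟨b.1, by omega⟩ : Fin (2 * k))) =
        blk G ⟨2 * (p + 1) - 1, by omega⟩ ⟨2 * (p + 1) - 3, by omega⟩ := by
      ext a b
      show G ⟨2 * p * k + (k + a.1), _⟩ ⟨(2 * p - 1) * k + b.1, _⟩ =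
        G ⟨(2 * (p + 1) - 1) * k + a.1, _⟩ ⟨(2 * (p + 1) - 3) * k + b.1, _⟩
      refine G_congr G ?_ ?_
      · show 2 * p * k + (k + a.1) = (2 * (p + 1) - 1) * k + a.1
        rw [show 2 * (p + 1) - 1 = 2 * p + 1 from by omega]
        omega
      · show (2 * p - 1) * k + b.1 = (2 * (p + 1) - 3) * k + b.1
        rw [show 2 * (p + 1) - 3 = 2 * p - 1 from by omega]
    rw [hsubM]
    exact (hG.2.2.2 (p + 1) (by omega) (by omega)).2
  -- upper bound: rank M + rank Tᴴ ≤ 2k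
  have hle := Matrix.rank_add_rank_le_card_of_mul_eq_zero hMT
  simp only [Fintype.card_fin] at hle
  omega
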